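/- Let 0 < ε < 1 and c ≥ 12/ε. There exists n₀ such that for all integers n ≥ n₀: 2·((n+1)^ε − n^ε)/(n+1)^ε − (n^ε − (n−1)^ε)/(n−1)^ε ≥ 6/(c n). -/

import Mathlib

theorem key_concavity_estimate (ε c : ℝ) (hε0 : 0 < ε) (hε1 : ε < 1)
    (hc : 12 / ε ≤ c) :
    ∃ n₀ : ℕ, ∀ n : ℕ, n₀ ≤ n →
      6 / (c * n) ≤
        2 * (((n : ℝ) + 1) ^ ε - (n : ℝ) ^ ε) / ((n : ℝ) + 1) ^ ε -
          ((n : ℝ) ^ ε - ((n : ℝ) - 1) ^ ε) / ((n : ℝ) - 1) ^ ε := by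
  refine ⟨6, fun n hn => ?_⟩
  set x : ℝ := (n : ℝ) with hxdef
  have hx : (6 : ℝ) ≤ x := by exact_mod_cast Nat.cast_le.mpr hn
  have hx0 : (0 : ℝ) < x := by linarith
  have hxm : (0 : ℝ) < x - 1 := by linarith
  have hxp : (0 : ℝ) < x + 1 := by linarith
  have hεc : 12 ≤ ε * c := by
    have := (div_le_iff₀ hε0).mp hc
    linarith [this]
  have hc0 : 0 < c := by nlinarith
  -- Bernoulli bounds
  have hA : x ^ ε / (x + 1) ^ ε ≤ 1 - ε / (x + 1) := by
    rw [← Real.div_rpow hx0.le hxp.le]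
    have h1 : x / (x + 1) = 1 + (-(1 / (x + 1))) := by field_simp; ring
    have h2 : (-1 : ℝ) ≤ -(1 / (x + 1)) := by
      have : 1 / (x + 1) ≤ 1 := by
        rw [div_le_one hxp]; linarith
      linarith
    calc (x / (x + 1)) ^ ε = (1 + (-(1 / (x + 1)))) ^ ε := by rw [h1]
      _ ≤ 1 + ε * (-(1 / (x + 1))) :=
        rpow_one_add_le_one_add_mul_self h2 hε0.le hε1.le
      _ = 1 - ε / (x + 1) := by ring
  have hB : x ^ ε / (x - 1) ^ ε ≤ 1 + ε / (x - 1) := by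
    rw [← Real.div_rpow hx0.le hxm.le]
    have h1 : x / (x - 1) = 1 + 1 / (x - 1) := by field_simp; ring
    have h2 : (-1 : ℝ) ≤ 1 / (x - 1) := le_trans (by norm_num) (by positivity : (0:ℝ) ≤ 1 / (x - 1))
    calc (x / (x - 1)) ^ ε = (1 + 1 / (x - 1)) ^ ε := by rw [h1]
      _ ≤ 1 + ε * (1 / (x - 1)) :=
        rpow_one_add_le_one_add_mul_self h2 hε0.le hε1.le
      _ = 1 + ε / (x - 1) := by ring
  have hxp' : (x + 1) ^ ε ≠ 0 := (Real.rpow_pos_of_pos hxp ε).ne'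
  have hxm' : (x - 1) ^ ε ≠ 0 := (Real.rpow_pos_of_pos hxm ε).ne'
  have hrw : 2 * ((x + 1) ^ ε - x ^ ε) / (x + 1) ^ ε -
      (x ^ ε - (x - 1) ^ ε) / (x - 1) ^ ε
      = 3 - 2 * (x ^ ε / (x + 1) ^ ε) - x ^ ε / (x - 1) ^ ε := by
    field_simp
    ring
  rw [hrw]
  -- arithmetic estimates
  have h1 : 6 / (c * x) ≤ ε / (2 * x) := by
    rw [div_le_div_iff₀ (by positivity) (by positivity)]
    nlinarith
  have h2 : ε / (2 * x) ≤ 2 * (ε / (x + 1)) - ε / (x - 1) := by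
    have heq : 2 * (ε / (x + 1)) - ε / (x - 1) = ε * (x - 3) / ((x + 1) * (x - 1)) := by
      field_simp
      ring
    rw [heq, div_le_div_iff₀ (by positivity) (by positivity)]
    nlinarith [mul_nonneg hε0.le (mul_nonneg hx0.le (by linarith : (0:ℝ) ≤ x - 6))]
  linarith
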